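/- The group U₁ has no nontrivial normal 3-subgroup: every normal subgroup N of U₁ such that N is a 3-group (IsPGroup 3 N) equals the trivial subgroup. (That is, O₃(U₁) = 1.) -/
import Mathlib


/-- The symmetric group on four letters. -/
abbrev S₄ := Equiv.Perm (Fin 4)

/-- The alternating group on four letters, as a (normal) subgroup of `S₄`. -/
abbrev A₄ : Subgroup S₄ := alternatingGroup (Fin 4)

/-- `U₁ = A₄ ⋊ S₄`, the external semidirect product of `S₄` acting on `A₄` by
conjugation. -/
abbrev U₁ := A₄ ⋊[MulAut.conjNormal] S₄

lemma key10 : ∀ x : Equiv.Perm (Fin 4), x ^ 3 = 1 → x ≠ 1 →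
    x ≠ x⁻¹ ∧ ∃ g : Equiv.Perm (Fin 4),
      g * x * g⁻¹ ≠ 1 ∧ g * x * g⁻¹ ≠ x ∧ g * x * g⁻¹ ≠ x⁻¹ := by decide

lemma card_s4 : Nat.card S₄ = 24 := by
  rw [Nat.card_eq_fintype_card, Fintype.card_perm, Fintype.card_fin]
  decide

lemma s4_triv (M : Subgroup S₄) (hn : M.Normal) (hp : IsPGroup 3 M) : M = ⊥ := by
  haveI : Fact (Nat.Prime 3) := ⟨by norm_num⟩
  by_contra h
  obtain ⟨⟨x, hxM⟩, hx1⟩ := Subgroup.ne_bot_iff_exists_ne_one.mp h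
  have hx1 : x ≠ 1 := by
    simpa [Subtype.ext_iff] using hx1
  -- x has order dividing a power of 3
  obtain ⟨k, hk⟩ := hp ⟨x, hxM⟩
  have hxpow : x ^ (3 : ℕ) ^ k = 1 := by
    simpa [Subtype.ext_iff, SubmonoidClass.coe_pow] using hk
  have hdvd : orderOf x ∣ 3 ^ k := orderOf_dvd_of_pow_eq_one hxpow
  obtain ⟨j, hjk, hj⟩ := (Nat.dvd_prime_pow (by norm_num)).mp hdvd
  have hdvd24 : orderOf x ∣ 24 := by
    have := orderOf_dvd_natCard (G := S₄) x
    rwa [card_s4] at this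
  have hj1 : j ≤ 1 := by
    by_contra hj2
    have h9 : (3:ℕ) ^ 2 ∣ 24 := dvd_trans (pow_dvd_pow 3 (by omega)) (hj ▸ hdvd24)
    norm_num at h9
  have hx3 : x ^ 3 = 1 := by
    apply orderOf_dvd_iff_pow_eq_one.mp
    rw [hj]
    exact pow_dvd_pow 3 hj1
  obtain ⟨hxne, g, hy1, hyx, hyxi⟩ := key10 x hx3 hx1
  -- the four elements 1, x, x⁻¹, g x g⁻¹ are distinct and in M
  have hyM : g * x * g⁻¹ ∈ M := hn.conj_mem x hxM g
  have hxiM : x⁻¹ ∈ M := M.inv_mem hxM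
  have hxi1 : x⁻¹ ≠ 1 := fun hh => hx1 (by rw [← inv_inv x, hh, inv_one])
  -- card bound
  obtain ⟨n, hcard⟩ := IsPGroup.iff_card.mp hp
  have hcd : Nat.card M ∣ 24 := by
    have := Subgroup.card_subgroup_dvd_card M
    rwa [card_s4] at this
  have hn1 : n ≤ 1 := by
    by_contra hn2
    have h9 : (3:ℕ) ^ 2 ∣ 24 := dvd_trans (pow_dvd_pow 3 (by omega)) (hcard ▸ hcd)
    norm_num at h9
  have hle3 : Nat.card M ≤ 3 := by
    rw [hcard]
    calc (3:ℕ) ^ n ≤ 3 ^ 1 := Nat.pow_le_pow_right (by norm_num) hn1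
    _ = 3 := by norm_num
  -- four distinct elements inside M
  set F : Set S₄ := {1, x, x⁻¹, g * x * g⁻¹} with hF
  have hsub : F ⊆ (M : Set S₄) := by
    intro z hz
    rcases hz with rfl | rfl | rfl | rfl
    · exact M.one_mem
    · exact hxM
    · exact hxiM
    · exact hyM
  have h4 : F.ncard = 4 := by
    rw [hF, Set.ncard_insert_of_notMem (by simp [hx1.symm, hxi1.symm, hy1.symm]),
      Set.ncard_insert_of_notMem (by simp [hxne, hyx.symm]),
      Set.ncard_insert_of_notMem (by simp [(Ne.symm hyxi)]),
      Set.ncard_singleton]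
  have hle : F.ncard ≤ (M : Set S₄).ncard := Set.ncard_le_ncard hsub (Set.toFinite _)
  have hcardM : (M : Set S₄).ncard = Nat.card M := (Nat.card_coe_set_eq _)
  omega

/-- `O₃(U₁) = 1`: every normal subgroup of `U₁` which is a `3`-group is trivial. -/
theorem stmt10 :
    ∀ N : Subgroup U₁, N.Normal → IsPGroup 3 N → N = ⊥ := by
  intro N hN hp
  -- Step 1: the projection of N to S₄ is trivial, so N ≤ range inl
  have h1 : N.map SemidirectProduct.rightHom = ⊥ :=
    s4_triv _ (hN.map _ SemidirectProduct.rightHom_surjective) (hp.map _)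
  have hker : N ≤ SemidirectProduct.rightHom.ker := (Subgroup.map_eq_bot_iff N).mp h1
  have hrange : N ≤ SemidirectProduct.inl.range := by
    rw [SemidirectProduct.range_inl_eq_ker_rightHom]; exact hker
  -- Step 2: pull back to A₄ and push to S₄
  set N' : Subgroup A₄ := N.comap SemidirectProduct.inl with hN'
  set M : Subgroup S₄ := N'.map A₄.subtype with hM
  have hpM : IsPGroup 3 M :=
    (hp.comap_of_injective SemidirectProduct.inl SemidirectProduct.inl_injective).map _
  have hMnormal : M.Normal := by
    constructor
    intro s hs g
    obtain ⟨a, haN', has⟩ := hs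
    refine ⟨MulAut.conjNormal g a, ?_, ?_⟩
    · show SemidirectProduct.inl ((MulAut.conjNormal g) a) ∈ N
      rw [SemidirectProduct.inl_aut]
      have := hN.conj_mem _ haN' (SemidirectProduct.inr g)
      simpa [map_inv] using this
    · simp [MulAut.conjNormal_apply, ← has]
  have hMbot : M = ⊥ := s4_triv M hMnormal hpM
  -- conclude
  rw [eq_bot_iff]
  intro u hu
  obtain ⟨a, ha⟩ := hrange hu
  have haN' : a ∈ N' := by
    show SemidirectProduct.inl a ∈ N
    rw [ha]; exact hu
  have hmem : (a : S₄) ∈ M := ⟨a, haN', rfl⟩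
  rw [hMbot] at hmem
  have ha1 : a = 1 := Subtype.ext (by simpa using hmem)
  rw [← ha, ha1, map_one]
  exact Subgroup.one_mem ⊥
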